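/- Let V be a ℚ-algebra, let M be a left V-module, and let π₀, π₁, …, πₙ be idempotents in V such that πᵢ·πⱼ = 0 whenever i < j and such that (πⱼ·πᵢ)·m = 0 for all m ∈ M whenever i ≠ j. Define inductively πᵢ⁽⁰⁾ := πᵢ and πᵢ⁽ʳ⁺¹⁾ := (1 − ½πₙ⁽ʳ⁾)⋯(1 − ½π₍ᵢ₊₁₎⁽ʳ⁾) · πᵢ⁽ʳ⁾ · (1 − ½π₍ᵢ₋₁₎⁽ʳ⁾)⋯(1 − ½π₀⁽ʳ⁾). Then for every r ≥ 0 and every i one has πᵢ⁽ʳ⁾·m = πᵢ·m for all m ∈ M. -/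
import Mathlib


/-- One step of the non-commutative Gram–Schmidt process:
`gs n π i = (1 − ½πₙ)⋯(1 − ½π₍ᵢ₊₁₎) · πᵢ · (1 − ½π₍ᵢ₋₁₎)⋯(1 − ½π₀)`,
where the factors in each product are taken with decreasing index from left to right. -/
def gs {V : Type*} [Ring V] [Algebra ℚ V] (n : ℕ) (π : ℕ → V) (i : ℕ) : V :=
  (((List.range (n - i)).map (fun k => (1 : V) - ((2 : ℚ)⁻¹) • π (n - k))).prod)
    * π i *
  (((List.range i).map (fun k => (1 : V) - ((2 : ℚ)⁻¹) • π (i - 1 - k))).prod)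

/-- The `r`-th iterate of the non-commutative Gram–Schmidt process:
`πᵢ⁽⁰⁾ := πᵢ` and `πᵢ⁽ʳ⁺¹⁾ := (1 − ½πₙ⁽ʳ⁾)⋯(1 − ½π₍ᵢ₊₁₎⁽ʳ⁾)·πᵢ⁽ʳ⁾·(1 − ½π₍ᵢ₋₁₎⁽ʳ⁾)⋯(1 − ½π₀⁽ʳ⁾)`. -/
def gsIter {V : Type*} [Ring V] [Algebra ℚ V] (n : ℕ) (π : ℕ → V) : ℕ → ℕ → V
  | 0 => π
  | r + 1 => gs n (gsIter n π r)

section Aux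
variable {V : Type*} [Ring V] [Algebra ℚ V] {M : Type*} [AddCommGroup M] [Module V M]

lemma gs_factor_right (σ : ℕ → V) (i j : ℕ) (h : ∀ m : M, (σ i * σ j) • m = 0) (m : M) :
    σ i • (((1:V) - ((2:ℚ)⁻¹) • σ j) • m) = σ i • m := by
  have h0 : ((2:ℚ)⁻¹ • (σ i * σ j)) • m = 0 := by
    rw [Algebra.smul_def, mul_smul, h, smul_zero]
  rw [smul_smul, mul_sub, mul_one, mul_smul_comm, sub_smul, h0, sub_zero]

lemma gs_factor_left (σ : ℕ → V) (i j : ℕ) (h : ∀ m : M, (σ j * σ i) • m = 0) (m : M) :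
    ((1:V) - ((2:ℚ)⁻¹) • σ j) • (σ i • m) = σ i • m := by
  have h0 : ((2:ℚ)⁻¹ • (σ j * σ i)) • m = 0 := by
    rw [Algebra.smul_def, mul_smul, h, smul_zero]
  rw [smul_smul, sub_mul, one_mul, smul_mul_assoc, sub_smul, h0, sub_zero]

lemma gs_prod_right (σ : ℕ → V) (i : ℕ) (l : List ℕ)
    (h : ∀ j ∈ l, ∀ m : M, (σ i * σ j) • m = 0) (m : M) :
    σ i • ((l.map (fun j => (1:V) - ((2:ℚ)⁻¹) • σ j)).prod • m) = σ i • m := by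
  induction l generalizing m with
  | nil => simp
  | cons j l ih =>
    simp only [List.map_cons, List.prod_cons, mul_smul]
    rw [gs_factor_right σ i j (h j (by simp))]
    exact ih (fun j hj => h j (by simp [hj])) m

lemma gs_prod_left (σ : ℕ → V) (i : ℕ) (l : List ℕ)
    (h : ∀ j ∈ l, ∀ m : M, (σ j * σ i) • m = 0) (m : M) :
    (l.map (fun j => (1:V) - ((2:ℚ)⁻¹) • σ j)).prod • (σ i • m) = σ i • m := by
  induction l with
  | nil => simp
  | cons j l ih =>
    simp only [List.map_cons, List.prod_cons, mul_smul]
    rw [ih (fun j hj => h j (by simp [hj]))]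
    exact gs_factor_left σ i j (h j (by simp)) m

lemma gs_act (σ : ℕ → V) (n i : ℕ) (hi : i ≤ n)
    (hcross : ∀ a b, a ≤ n → b ≤ n → a ≠ b → ∀ m : M, (σ b * σ a) • m = 0) (m : M) :
    gs n σ i • m = σ i • m := by
  unfold gs
  have hL : ((List.range (n - i)).map (fun k => (1:V) - ((2:ℚ)⁻¹) • σ (n - k)))
      = ((List.range (n - i)).map (fun k => n - k)).map (fun j => (1:V) - ((2:ℚ)⁻¹) • σ j) := by
    rw [List.map_map]; rfl
  have hR : ((List.range i).map (fun k => (1:V) - ((2:ℚ)⁻¹) • σ (i - 1 - k)))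
      = ((List.range i).map (fun k => i - 1 - k)).map (fun j => (1:V) - ((2:ℚ)⁻¹) • σ j) := by
    rw [List.map_map]; rfl
  rw [hL, hR, mul_smul, mul_smul]
  rw [gs_prod_right σ i _ (by
    intro j hj m'
    simp only [List.mem_map, List.mem_range] at hj
    obtain ⟨k, hk, rfl⟩ := hj
    exact hcross (i - 1 - k) i (by omega) hi (by omega) m')]
  exact gs_prod_left σ i _ (by
    intro j hj m'
    simp only [List.mem_map, List.mem_range] at hj
    obtain ⟨k, hk, rfl⟩ := hj
    exact hcross i (n - k) hi (by omega) (by omega) m') m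

end Aux

/-- Proposition `Caction2` of the paper: if `π₀, …, πₙ` are idempotents with `πᵢ·πⱼ = 0` for
`i < j` whose cross products `πⱼ·πᵢ` (`i ≠ j`) act trivially on a left `V`-module `M`, then
every iterate of the non-commutative Gram–Schmidt process acts on `M` exactly as the
original idempotents. -/
theorem stmt_5 {V : Type*} [Ring V] [Algebra ℚ V]
    (M : Type*) [AddCommGroup M] [Module V M] (n : ℕ) (π : ℕ → V)
    (hidem : ∀ i, i ≤ n → π i * π i = π i)
    (horth : ∀ i j, i ≤ n → j ≤ n → i < j → π i * π j = 0)
    (hact : ∀ i j, i ≤ n → j ≤ n → i ≠ j → ∀ m : M, (π j * π i) • m = 0) :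
    ∀ r : ℕ, ∀ i, i ≤ n → ∀ m : M, gsIter n π r i • m = π i • m := by
  intro r
  induction r with
  | zero => intro i hi m; rfl
  | succ r ih =>
    intro i hi m
    have hcross : ∀ a b, a ≤ n → b ≤ n → a ≠ b → ∀ m : M,
        (gsIter n π r b * gsIter n π r a) • m = 0 := by
      intro a b ha hb hne m
      rw [mul_smul, ih a ha m, ih b hb (π a • m), ← mul_smul]
      exact hact a b ha hb hne m
    show gs n (gsIter n π r) i • m = π i • m
    rw [gs_act (gsIter n π r) n i hi hcross m, ih i hi m]
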